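/- Let Φ be a p×q random matrix with i.i.d. entries of mean 0, variance 1 and fourth moment ν̃₄ < ∞, and let A be a deterministic p×p real symmetric matrix. Then E ‖ A^{1/2}(Φ Φᵀ − q I_p) A^{1/2} ‖_F² = q [ (ν̃₄ − 3) ∑_{j=1}^p A_{jj}² + ‖A‖_F² + (tr A)² ], where A is additionally assumed positive semidefinite so that A^{1/2} is defined. -/

import Mathlib

open MeasureTheory ProbabilityTheory Matrix

/-- The square root of a positive semidefinite matrix, as defined in Mathlib (Dec 2024),
since removed from Mathlib. -/
noncomputable def Matrix.PosSemidef.sqrt {n : Type*} [Fintype n] [DecidableEq n] {𝕜 : Type*}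
    [RCLike 𝕜] [PartialOrder 𝕜] [StarOrderedRing 𝕜] {A : Matrix n n 𝕜} (hA : A.PosSemidef) : Matrix n n 𝕜 :=
  (hA.1.eigenvectorUnitary : Matrix n n 𝕜) * diagonal ((↑) ∘ (√·) ∘ hA.1.eigenvalues) *
    (star (hA.1.eigenvectorUnitary : Matrix n n 𝕜))

lemma aux_sqrt_transpose {n : ℕ} {A : Matrix (Fin n) (Fin n) ℝ} (hA : A.PosSemidef) :
    (hA.sqrt)ᵀ = hA.sqrt := by
  simp only [Matrix.PosSemidef.sqrt, Matrix.transpose_mul, Matrix.star_eq_conjTranspose,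
    Matrix.conjTranspose_eq_transpose_of_trivial, Matrix.transpose_transpose,
    Matrix.diagonal_transpose, Matrix.mul_assoc]

lemma Matrix.PosSemidef.sqrt_mul_self {n : ℕ} {A : Matrix (Fin n) (Fin n) ℝ} (hA : A.PosSemidef) :
    hA.sqrt * hA.sqrt = A := by
  have hU := Unitary.coe_star_mul_self hA.1.eigenvectorUnitary
  conv_rhs => rw [hA.1.spectral_theorem, Unitary.conjStarAlgAut_apply]
  simp only [Matrix.PosSemidef.sqrt]
  set U : Matrix (Fin n) (Fin n) ℝ := (hA.1.eigenvectorUnitary : Matrix (Fin n) (Fin n) ℝ)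
  calc U * diagonal ((↑) ∘ (√·) ∘ hA.1.eigenvalues) * star U
        * (U * diagonal ((↑) ∘ (√·) ∘ hA.1.eigenvalues) * star U)
      = U * (diagonal ((↑) ∘ (√·) ∘ hA.1.eigenvalues) * (star U * U)
        * diagonal ((↑) ∘ (√·) ∘ hA.1.eigenvalues)) * star U := by simp only [Matrix.mul_assoc]
    _ = U * diagonal (RCLike.ofReal ∘ hA.1.eigenvalues) * star U := by
        rw [hU, Matrix.mul_one, diagonal_mul_diagonal]
        congr 3
        funext i
        simp [Real.mul_self_sqrt (hA.eigenvalues_nonneg i)]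


section AuxProb
variable {Ω : Type*} [MeasurableSpace Ω] {μ : Measure Ω} [IsProbabilityMeasure μ]
  {ι : Type*} [DecidableEq ι] {X : ι → Ω → ℝ}

lemma aux_integrable_pow {f : Ω → ℝ} (hfm : Measurable f) (hf : MemLp f 4 μ)
    {m : ℕ} (hm : m ≤ 4) : Integrable (fun ω => f ω ^ m) μ := by
  have h4' : Integrable (fun ω => |f ω| ^ (4 : ℕ)) μ := by
    have := hf.integrable_norm_rpow (by norm_num) (by norm_num)
    refine this.congr (Filter.Eventually.of_forall fun ω => ?_)
    simp [Real.norm_eq_abs]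
  refine Integrable.mono' (h4'.add (integrable_const 1)) ((hfm.pow_const m).aestronglyMeasurable)
    (Filter.Eventually.of_forall fun ω => ?_)
  simp only [Real.norm_eq_abs, abs_pow, Pi.add_apply]
  rcases le_or_gt (|f ω|) 1 with h | h
  · have : |f ω| ^ m ≤ 1 := pow_le_one₀ (abs_nonneg _) h
    nlinarith [pow_nonneg (abs_nonneg (f ω)) 4]
  · have : |f ω| ^ m ≤ |f ω| ^ 4 := pow_le_pow_right₀ h.le hm
    nlinarith

lemma aux_indep_pow (hX : iIndepFun X μ)
    (m : ι → ℕ) :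
    iIndepFun (fun i ω => X i ω ^ m i) μ :=
  hX.comp (fun i x => x ^ m i) (fun _ => measurable_id.pow_const _)

lemma aux_integrable_prod_pow (hX : iIndepFun X μ)
    (hXm : ∀ i, Measurable (X i)) (hL4 : ∀ i, MemLp (X i) 4 μ)
    (m : ι → ℕ) (hm : ∀ i, m i ≤ 4) (s : Finset ι) :
    Integrable (fun ω => ∏ i ∈ s, X i ω ^ m i) μ := by
  classical
  induction s using Finset.induction_on with
  | empty => simpa using integrable_const (1 : ℝ)
  | insert a s ha ih =>
    have hind : IndepFun (∏ j ∈ s, fun ω => X j ω ^ m j) (fun ω => X a ω ^ m a) μ :=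
      (aux_indep_pow hX m).indepFun_finset_prod_of_notMem
        (fun i => (hXm i).pow_const _) ha
    have h1 : Integrable (fun ω => X a ω ^ m a) μ := aux_integrable_pow (hXm a) (hL4 a) (hm a)
    have h2 : Integrable ((∏ j ∈ s, fun ω => X j ω ^ m j) * fun ω => X a ω ^ m a) μ :=
      hind.integrable_mul (by simpa [Finset.prod_fn] using ih) h1
    refine h2.congr (Filter.Eventually.of_forall fun ω => ?_)
    simp [Finset.prod_apply, Finset.prod_insert ha, mul_comm]

lemma aux_integral_prod_pow (hX : iIndepFun X μ)
    (hXm : ∀ i, Measurable (X i)) (hL4 : ∀ i, MemLp (X i) 4 μ)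
    (m : ι → ℕ) (hm : ∀ i, m i ≤ 4) (s : Finset ι) :
    ∫ ω, ∏ i ∈ s, X i ω ^ m i ∂μ = ∏ i ∈ s, ∫ ω, X i ω ^ m i ∂μ := by
  classical
  induction s using Finset.induction_on with
  | empty => simp
  | insert a s ha ih =>
    have hind : IndepFun (∏ j ∈ s, fun ω => X j ω ^ m j) (fun ω => X a ω ^ m a) μ :=
      (aux_indep_pow hX m).indepFun_finset_prod_of_notMem
        (fun i => (hXm i).pow_const _) ha
    have h1 : Integrable (fun ω => X a ω ^ m a) μ := aux_integrable_pow (hXm a) (hL4 a) (hm a)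
    have h2 : Integrable (∏ j ∈ s, fun ω => X j ω ^ m j) μ := by
      simpa [Finset.prod_fn] using aux_integrable_prod_pow hX hXm hL4 m hm s
    have := hind.integral_mul_eq_mul_integral h2.aestronglyMeasurable h1.aestronglyMeasurable
    rw [Finset.prod_insert ha, ← ih]
    calc ∫ ω, ∏ i ∈ insert a s, X i ω ^ m i ∂μ
        = ∫ ω, ((∏ j ∈ s, fun ω => X j ω ^ m j) * fun ω => X a ω ^ m a) ω ∂μ := by
          congr 1; funext ω; simp [Finset.prod_apply, Finset.prod_insert ha, mul_comm]
      _ = (∫ ω, (∏ j ∈ s, fun ω' => X j ω' ^ m j) ω ∂μ) * ∫ ω, X a ω ^ m a ∂μ := this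
      _ = (∫ ω, X a ω ^ m a ∂μ) * ∫ ω, ∏ i ∈ s, X i ω ^ m i ∂μ := by
          rw [mul_comm]; congr 1; congr 1; funext ω; simp [Finset.prod_apply]

lemma aux_count_prod {M : Type*} [CommMonoid M] (a : ι → M) (u v w z : ι) :
    ∏ t ∈ ({u, v, w, z} : Finset ι), a t ^ ((if t = u then 1 else 0) + (if t = v then 1 else 0)
      + (if t = w then 1 else 0) + (if t = z then 1 else 0)) = a u * a v * a w * a z := by
  simp only [pow_add, Finset.prod_mul_distrib, pow_ite, pow_one, pow_zero]
  rw [Finset.prod_ite_eq', Finset.prod_ite_eq', Finset.prod_ite_eq', Finset.prod_ite_eq']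
  simp [Finset.mem_insert]

lemma aux_integrable_mul4 (hX : iIndepFun X μ)
    (hXm : ∀ i, Measurable (X i)) (hL4 : ∀ i, MemLp (X i) 4 μ) (u v w z : ι) :
    Integrable (fun ω => X u ω * X v ω * X w ω * X z ω) μ := by
  have h := aux_integrable_prod_pow hX hXm hL4
    (fun t => (if t = u then 1 else 0) + (if t = v then 1 else 0)
      + (if t = w then 1 else 0) + (if t = z then 1 else 0))
    (fun i => by split_ifs <;> norm_num) ({u, v, w, z} : Finset ι)
  refine h.congr (Filter.Eventually.of_forall fun ω => ?_)
  exact aux_count_prod (fun t => X t ω) u v w z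

lemma aux_integrable_mul2 (hX : iIndepFun X μ)
    (hXm : ∀ i, Measurable (X i)) (hL4 : ∀ i, MemLp (X i) 4 μ) (u v : ι) :
    Integrable (fun ω => X u ω * X v ω) μ := by
  by_cases huv : u = v
  · subst huv
    have := aux_integrable_pow (hXm u) (hL4 u) (show 2 ≤ 4 by norm_num)
    refine this.congr (Filter.Eventually.of_forall fun ω => ?_)
    ring
  · have h := aux_integrable_prod_pow hX hXm hL4 (fun _ => 1) (fun _ => by norm_num)
      ({u, v} : Finset ι)
    refine h.congr (Filter.Eventually.of_forall fun ω => ?_)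
    simp [Finset.prod_pair huv]

lemma aux_pair (hX : iIndepFun X μ)
    (hXm : ∀ i, Measurable (X i)) (hL4 : ∀ i, MemLp (X i) 4 μ)
    (hE1 : ∀ t, ∫ ω, X t ω ∂μ = 0) (hE2 : ∀ t, ∫ ω, X t ω ^ 2 ∂μ = 1) (u v : ι) :
    ∫ ω, X u ω * X v ω ∂μ = if u = v then 1 else 0 := by
  by_cases huv : u = v
  · subst huv
    simp only [if_pos rfl]
    rw [show (fun ω => X u ω * X u ω) = fun ω => X u ω ^ 2 from funext fun ω => (sq _).symm]
    exact hE2 u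
  · rw [if_neg huv]
    have h := aux_integral_prod_pow hX hXm hL4 (fun _ => 1) (fun _ => by norm_num)
      ({u, v} : Finset ι)
    rw [Finset.prod_pair huv] at h
    rw [show (fun ω => X u ω * X v ω) = fun ω => ∏ i ∈ ({u, v} : Finset ι), X i ω ^ 1 from
      funext fun ω => by rw [Finset.prod_pair huv]; simp]
    rw [h]
    simp [hE1]

lemma aux_quad (hX : iIndepFun X μ)
    (hXm : ∀ i, Measurable (X i)) (hL4 : ∀ i, MemLp (X i) 4 μ) (u v w z : ι) :
    ∫ ω, X u ω * X v ω * X w ω * X z ω ∂μ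
      = ∏ t ∈ ({u, v, w, z} : Finset ι), ∫ ω, X t ω ^ ((if t = u then 1 else 0)
          + (if t = v then 1 else 0) + (if t = w then 1 else 0) + (if t = z then 1 else 0)) ∂μ := by
  have h1 : (fun ω => X u ω * X v ω * X w ω * X z ω)
      = fun ω => ∏ t ∈ ({u, v, w, z} : Finset ι), X t ω ^ ((if t = u then 1 else 0)
          + (if t = v then 1 else 0) + (if t = w then 1 else 0) + (if t = z then 1 else 0)) :=
    funext fun ω => (aux_count_prod (fun t => X t ω) u v w z).symm
  rw [h1]
  exact aux_integral_prod_pow hX hXm hL4 _ (fun i => by split_ifs <;> norm_num) _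

lemma aux_wick (hX : iIndepFun X μ)
    (hXm : ∀ i, Measurable (X i)) (hL4 : ∀ i, MemLp (X i) 4 μ) {ν : ℝ}
    (hE1 : ∀ t, ∫ ω, X t ω ∂μ = 0) (hE2 : ∀ t, ∫ ω, X t ω ^ 2 ∂μ = 1)
    (hE4 : ∀ t, ∫ ω, X t ω ^ 4 ∂μ = ν) (u v w z : ι) :
    ∫ ω, X u ω * X v ω * X w ω * X z ω ∂μ =
      (if u = v then (1:ℝ) else 0) * (if w = z then 1 else 0)
      + (if u = w then (1:ℝ) else 0) * (if v = z then 1 else 0)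
      + (if u = z then (1:ℝ) else 0) * (if v = w then 1 else 0)
      + (ν - 3) * ((if u = v then (1:ℝ) else 0) * (if v = w then 1 else 0)
          * (if w = z then 1 else 0)) := by
  rw [aux_quad hX hXm hL4 u v w z]
  have e1 : (v = u) = (u = v) := propext eq_comm
  have e2 : (w = u) = (u = w) := propext eq_comm
  have e3 : (z = u) = (u = z) := propext eq_comm
  have e4 : (w = v) = (v = w) := propext eq_comm
  have e5 : (z = v) = (v = z) := propext eq_comm
  have e6 : (z = w) = (w = z) := propext eq_comm
  by_cases huv : u = v <;> by_cases huw : u = w <;> by_cases huz : u = z <;>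
    by_cases hvw : v = w <;> by_cases hvz : v = z <;> by_cases hwz : w = z <;>
    subst_vars <;>
    simp_all [Finset.prod_insert, Finset.mem_insert, Finset.mem_singleton,
      hE1, hE2, hE4] <;>
    ring

end AuxProb

lemma aux_frob {n : ℕ} (S M A : Matrix (Fin n) (Fin n) ℝ)
    (hSt : Sᵀ = S) (hMt : Mᵀ = M) (hS2 : S * S = A) :
    ∑ i, ∑ j, ((S * M * S) i j) ^ 2
      = ∑ a, ∑ b, ∑ c, ∑ d, A b c * A d a * (M a b * M c d) := by
  have h1 : ∀ B : Matrix (Fin n) (Fin n) ℝ, ∑ i, ∑ j, (B i j) ^ 2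
      = Matrix.trace (B * Bᵀ) := by
    intro B
    simp [Matrix.trace, Matrix.diag, Matrix.mul_apply, Matrix.transpose_apply, sq]
  have h2 : (S * M * S) * (S * M * S)ᵀ = S * (M * (A * (M * S))) := by
    rw [Matrix.transpose_mul, Matrix.transpose_mul, hSt, hMt, ← hS2]
    simp only [Matrix.mul_assoc]
  have h3 : Matrix.trace (S * (M * (A * (M * S)))) = Matrix.trace (M * (A * (M * A))) := by
    rw [Matrix.trace_mul_comm]
    simp only [Matrix.mul_assoc]
    rw [hS2]
  rw [h1 (S * M * S), h2, h3]
  simp only [Matrix.trace, Matrix.diag, Matrix.mul_apply, Finset.mul_sum]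
  refine Finset.sum_congr rfl fun a _ => Finset.sum_congr rfl fun b _ =>
    Finset.sum_congr rfl fun c _ => Finset.sum_congr rfl fun d _ => by ring

lemma aux_double_sum {q : ℕ} (α β : ℝ) :
    ∑ x : Fin q, ∑ y : Fin q, (α + β * (if x = y then (1:ℝ) else 0))
      = (q:ℝ)^2 * α + (q:ℝ) * β := by
  simp [Finset.sum_add_distrib, mul_ite, mul_one, mul_zero, Finset.sum_ite_eq,
    Finset.card_univ, sq, Finset.mul_sum]
  ring

lemma aux_ite_lin (Pab Pcd Pac Pbd Pad Pbc Q : Prop)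
    [Decidable Pab] [Decidable Pcd] [Decidable Pac] [Decidable Pbd] [Decidable Pad]
    [Decidable Pbc] [Decidable Q] (ν : ℝ) :
    (if Pab then (1:ℝ) else 0) * (if Pcd then 1 else 0)
      + (if Pac ∧ Q then 1 else 0) * (if Pbd ∧ Q then 1 else 0)
      + (if Pad ∧ Q then 1 else 0) * (if Pbc ∧ Q then 1 else 0)
      + (ν - 3) * ((if Pab then 1 else 0) * (if Pbc ∧ Q then 1 else 0) * (if Pcd then 1 else 0))
    = (if Pab then (1:ℝ) else 0) * (if Pcd then 1 else 0)
      + ((if Pac then (1:ℝ) else 0) * (if Pbd then 1 else 0)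
         + (if Pad then (1:ℝ) else 0) * (if Pbc then 1 else 0)
         + (ν - 3) * ((if Pab then 1 else 0) * (if Pbc then 1 else 0) * (if Pcd then 1 else 0)))
        * (if Q then 1 else 0) := by
  by_cases h1 : Pab <;> by_cases h2 : Pcd <;> by_cases h3 : Pac <;> by_cases h4 : Pbd <;>
    by_cases h5 : Pad <;> by_cases h6 : Pbc <;> by_cases h7 : Q <;> simp [*] <;> ring

theorem expectation_frobenius_centered_gram
    {Ω : Type*} [MeasurableSpace Ω] (μ : Measure Ω) [IsProbabilityMeasure μ]
    (p q : ℕ) (Phi : Ω → Matrix (Fin p) (Fin q) ℝ)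
    (A : Matrix (Fin p) (Fin p) ℝ) (hAsym : A.IsSymm) (hA : A.PosSemidef) (ν : ℝ)
    (hmeas : ∀ i j, Measurable fun ω => Phi ω i j)
    (hL4 : ∀ i j, MemLp (fun ω => Phi ω i j) 4 μ)
    (hindep : iIndepFun
      (fun (ij : Fin p × Fin q) ω => Phi ω ij.1 ij.2) μ)
    (hident : ∀ ij kl : Fin p × Fin q,
      IdentDistrib (fun ω => Phi ω ij.1 ij.2) (fun ω => Phi ω kl.1 kl.2) μ μ)
    (hmean : ∀ i j, ∫ ω, Phi ω i j ∂μ = 0)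
    (hvar : ∀ i j, ∫ ω, (Phi ω i j) ^ 2 ∂μ = 1)
    (hfour : ∀ i j, ∫ ω, (Phi ω i j) ^ 4 ∂μ = ν) :
    ∫ ω, ∑ i, ∑ j,
        ((hA.sqrt * (Phi ω * (Phi ω)ᵀ - (q : ℝ) • (1 : Matrix (Fin p) (Fin p) ℝ)) * hA.sqrt) i j) ^ 2 ∂μ
      = (q : ℝ) * ((ν - 3) * ∑ j, (A j j) ^ 2 + (∑ i, ∑ j, (A i j) ^ 2)
          + A.trace ^ 2) := by
  classical
  set X : Fin p × Fin q → Ω → ℝ := fun t ω => Phi ω t.1 t.2 with hXdef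
  have hXm : ∀ t, Measurable (X t) := fun t => hmeas t.1 t.2
  have hXL4 : ∀ t, MemLp (X t) 4 μ := fun t => hL4 t.1 t.2
  have hXindep : iIndepFun X μ := hindep
  have hE1 : ∀ t, ∫ ω, X t ω ∂μ = 0 := fun t => hmean t.1 t.2
  have hE2 : ∀ t, ∫ ω, X t ω ^ 2 ∂μ = 1 := fun t => hvar t.1 t.2
  have hE4 : ∀ t, ∫ ω, X t ω ^ 4 ∂μ = ν := fun t => hfour t.1 t.2
  set M : Ω → Matrix (Fin p) (Fin p) ℝ :=
    fun ω => Phi ω * (Phi ω)ᵀ - (q : ℝ) • (1 : Matrix (Fin p) (Fin p) ℝ) with hMdef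
  -- square root is symmetric
  have hSt : (hA.sqrt)ᵀ = hA.sqrt := by
    exact aux_sqrt_transpose hA
  have hMt : ∀ ω, (M ω)ᵀ = M ω := by
    intro ω
    simp [hMdef, Matrix.transpose_sub, Matrix.transpose_mul, Matrix.transpose_smul,
      Matrix.transpose_one, Matrix.transpose_transpose, Matrix.mul_assoc]
  have hpt : ∀ ω, (∑ i, ∑ j, ((hA.sqrt * M ω * hA.sqrt) i j) ^ 2)
      = ∑ a, ∑ b, ∑ c, ∑ d, A b c * A d a * (M ω a b * M ω c d) :=
    fun ω => aux_frob hA.sqrt (M ω) A hSt (hMt ω) hA.sqrt_mul_self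
  -- entries of M
  have hMentry : ∀ ω a b, M ω a b
      = (∑ t, X (a, t) ω * X (b, t) ω) - (q : ℝ) * (if a = b then 1 else 0) := by
    intro ω a b
    simp [hMdef, Matrix.sub_apply, Matrix.mul_apply, Matrix.transpose_apply,
      Matrix.smul_apply, Matrix.one_apply, hXdef, mul_comm]
  have hmul2Int : ∀ u v, Integrable (fun ω => X u ω * X v ω) μ :=
    aux_integrable_mul2 hXindep hXm hXL4
  have hquadInt : ∀ u v w z, Integrable (fun ω => X u ω * X v ω * X w ω * X z ω) μ :=
    aux_integrable_mul4 hXindep hXm hXL4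
  have hpair := aux_pair hXindep hXm hXL4 hE1 hE2
  have hwick := aux_wick hXindep hXm hXL4 hE1 hE2 hE4
  have hGint : ∀ a b : Fin p, Integrable (fun ω => ∑ t, X (a, t) ω * X (b, t) ω) μ :=
    fun a b => integrable_finset_sum _ fun t _ => hmul2Int _ _
  have hEG : ∀ a b : Fin p, ∫ ω, ∑ t, X (a, t) ω * X (b, t) ω ∂μ
      = (q : ℝ) * (if a = b then 1 else 0) := by
    intro a b
    rw [integral_finset_sum _ fun t _ => hmul2Int _ _]
    simp [hpair, Prod.ext_iff, mul_comm]
  have hGGint : ∀ a b c d : Fin p, Integrable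
      (fun ω => (∑ t, X (a, t) ω * X (b, t) ω) * (∑ s, X (c, s) ω * X (d, s) ω)) μ := by
    intro a b c d
    have hrw : (fun ω => (∑ t, X (a, t) ω * X (b, t) ω) * (∑ s, X (c, s) ω * X (d, s) ω))
        = fun ω => ∑ t, ∑ s, X (a, t) ω * X (b, t) ω * (X (c, s) ω * X (d, s) ω) := by
      funext ω; rw [Finset.sum_mul_sum]
    rw [hrw]
    exact integrable_finset_sum _ fun t _ => integrable_finset_sum _ fun s _ => by
      simpa [mul_assoc] using hquadInt (a, t) (b, t) (c, s) (d, s)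
  have hEGG : ∀ a b c d : Fin p,
      ∫ ω, (∑ t, X (a, t) ω * X (b, t) ω) * (∑ s, X (c, s) ω * X (d, s) ω) ∂μ
      = (q : ℝ)^2 * ((if a = b then 1 else 0) * (if c = d then 1 else 0))
        + (q : ℝ) * ((if a = c then 1 else 0) * (if b = d then 1 else 0))
        + (q : ℝ) * ((if a = d then 1 else 0) * (if b = c then 1 else 0))
        + (ν - 3) * (q : ℝ) * ((if a = b then 1 else 0) * (if b = c then 1 else 0)
            * (if c = d then (1:ℝ) else 0)) := by
    intro a b c d
    have hrw : (fun ω => (∑ t, X (a, t) ω * X (b, t) ω) * (∑ s, X (c, s) ω * X (d, s) ω))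
        = fun ω => ∑ t, ∑ s, X (a, t) ω * X (b, t) ω * X (c, s) ω * X (d, s) ω := by
      funext ω; rw [Finset.sum_mul_sum]
      exact Finset.sum_congr rfl fun t _ => Finset.sum_congr rfl fun s _ => by ring
    rw [hrw, integral_finset_sum _ fun t _ => integrable_finset_sum _ fun s _ =>
      hquadInt (a, t) (b, t) (c, s) (d, s)]
    have : ∀ t : Fin q, ∫ ω, ∑ s, X (a, t) ω * X (b, t) ω * X (c, s) ω * X (d, s) ω ∂μ
        = ∑ s, ∫ ω, X (a, t) ω * X (b, t) ω * X (c, s) ω * X (d, s) ω ∂μ :=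
      fun t => integral_finset_sum _ fun s _ => hquadInt (a, t) (b, t) (c, s) (d, s)
    simp only [this, hwick]
    simp only [Prod.mk.injEq, and_true]
    rw [show (∑ x : Fin q, ∑ y : Fin q,
        ((if a = b then (1:ℝ) else 0) * (if c = d then 1 else 0)
          + (if a = c ∧ x = y then 1 else 0) * (if b = d ∧ x = y then 1 else 0)
          + (if a = d ∧ x = y then 1 else 0) * (if b = c ∧ x = y then 1 else 0)
          + (ν - 3) * ((if a = b then 1 else 0) * (if b = c ∧ x = y then 1 else 0)
              * (if c = d then 1 else 0))))
        = ∑ x : Fin q, ∑ y : Fin q,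
          ((if a = b then (1:ℝ) else 0) * (if c = d then 1 else 0)
            + ((if a = c then (1:ℝ) else 0) * (if b = d then 1 else 0)
               + (if a = d then (1:ℝ) else 0) * (if b = c then 1 else 0)
               + (ν - 3) * ((if a = b then 1 else 0) * (if b = c then 1 else 0)
                   * (if c = d then 1 else 0)))
              * (if x = y then 1 else 0)) from
      Finset.sum_congr rfl fun x _ => Finset.sum_congr rfl fun y _ =>
        aux_ite_lin (a = b) (c = d) (a = c) (b = d) (a = d) (b = c) (x = y) ν]
    rw [aux_double_sum]
    ring
  -- covariance of entries of M
  have hMMint : ∀ a b c d : Fin p, Integrable (fun ω => M ω a b * M ω c d) μ := by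
    intro a b c d
    have hrw : (fun ω => M ω a b * M ω c d) = fun ω =>
        ((∑ t, X (a, t) ω * X (b, t) ω) * (∑ s, X (c, s) ω * X (d, s) ω)
          - ((q:ℝ) * (if c = d then 1 else 0)) * (∑ t, X (a, t) ω * X (b, t) ω))
          - ((q:ℝ) * (if a = b then 1 else 0)) * (∑ s, X (c, s) ω * X (d, s) ω)
          + ((q:ℝ) * (if a = b then 1 else 0)) * ((q:ℝ) * (if c = d then 1 else 0)) := by
      funext ω; rw [hMentry ω a b, hMentry ω c d]; ring
    rw [hrw]
    exact (((hGGint a b c d).sub ((hGint a b).const_mul _)).sub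
      ((hGint c d).const_mul _)).add (integrable_const _)
  have hEMM : ∀ a b c d : Fin p, ∫ ω, M ω a b * M ω c d ∂μ
      = (q:ℝ) * ((if a = c then (1:ℝ) else 0) * (if b = d then 1 else 0)
        + (if a = d then (1:ℝ) else 0) * (if b = c then 1 else 0)
        + (ν - 3) * ((if a = b then (1:ℝ) else 0) * (if b = c then 1 else 0)
            * (if c = d then 1 else 0))) := by
    intro a b c d
    have hrw : (fun ω => M ω a b * M ω c d) = fun ω =>
        ((∑ t, X (a, t) ω * X (b, t) ω) * (∑ s, X (c, s) ω * X (d, s) ω)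
          - ((q:ℝ) * (if c = d then 1 else 0)) * (∑ t, X (a, t) ω * X (b, t) ω))
          - ((q:ℝ) * (if a = b then 1 else 0)) * (∑ s, X (c, s) ω * X (d, s) ω)
          + ((q:ℝ) * (if a = b then 1 else 0)) * ((q:ℝ) * (if c = d then 1 else 0)) := by
      funext ω; rw [hMentry ω a b, hMentry ω c d]; ring
    rw [hrw]
    have iGG := hGGint a b c d
    have iG1 : Integrable (fun ω => ((q:ℝ) * if c = d then 1 else 0)
        * ∑ t, X (a, t) ω * X (b, t) ω) μ := (hGint a b).const_mul _
    have iG2 : Integrable (fun ω => ((q:ℝ) * if a = b then 1 else 0)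
        * ∑ s, X (c, s) ω * X (d, s) ω) μ := (hGint c d).const_mul _
    have i12 : Integrable (fun ω =>
        (∑ t, X (a, t) ω * X (b, t) ω) * (∑ s, X (c, s) ω * X (d, s) ω)
          - ((q:ℝ) * if c = d then 1 else 0) * ∑ t, X (a, t) ω * X (b, t) ω) μ := iGG.sub iG1
    have i123 : Integrable (fun ω =>
        (∑ t, X (a, t) ω * X (b, t) ω) * (∑ s, X (c, s) ω * X (d, s) ω)
          - ((q:ℝ) * if c = d then 1 else 0) * ∑ t, X (a, t) ω * X (b, t) ω
          - ((q:ℝ) * if a = b then 1 else 0) * ∑ s, X (c, s) ω * X (d, s) ω) μ := i12.sub iG2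
    rw [integral_add i123 (integrable_const _), integral_sub i12 iG2, integral_sub iGG iG1,
      integral_const_mul, integral_const_mul, integral_const, hEGG, hEG, hEG]
    simp only [measure_univ, ENNReal.toReal_one, probReal_univ, smul_eq_mul, one_mul]
    ring
  -- rewrite the integrand and integrate term by term
  have hglobal : (fun ω => ∑ i, ∑ j, ((hA.sqrt * M ω * hA.sqrt) i j) ^ 2)
      = fun ω => ∑ x : Fin p × Fin p × Fin p × Fin p,
          A x.2.1 x.2.2.1 * A x.2.2.2 x.1 * (M ω x.1 x.2.1 * M ω x.2.2.1 x.2.2.2) := by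
    funext ω
    rw [hpt ω]
    simp only [Fintype.sum_prod_type]
  rw [hglobal, integral_finset_sum _ fun x _ =>
    ((hMMint x.1 x.2.1 x.2.2.1 x.2.2.2).const_mul (A x.2.1 x.2.2.1 * A x.2.2.2 x.1))]
  simp only [integral_const_mul, hEMM]
  simp only [Fintype.sum_prod_type]
  -- final combinatorial evaluation
  have hS1 : ∑ a : Fin p, ∑ b : Fin p, ∑ c : Fin p, ∑ d : Fin p,
      A b c * A d a * ((if a = c then (1:ℝ) else 0) * (if b = d then 1 else 0))
      = ∑ i, ∑ j, (A i j) ^ 2 := by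
    simp [mul_ite, ite_mul, mul_zero, zero_mul, mul_one, Finset.sum_ite_eq, sq]
    rw [Finset.sum_comm]
  have hS2 : ∑ a : Fin p, ∑ b : Fin p, ∑ c : Fin p, ∑ d : Fin p,
      A b c * A d a * ((if a = d then (1:ℝ) else 0) * (if b = c then 1 else 0))
      = A.trace ^ 2 := by
    simp [mul_ite, ite_mul, mul_zero, zero_mul, mul_one, Finset.sum_ite_eq, sq,
      Matrix.trace, Matrix.diag, Finset.sum_mul_sum]
    rw [Finset.sum_comm]
  have hS3 : ∑ a : Fin p, ∑ b : Fin p, ∑ c : Fin p, ∑ d : Fin p,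
      A b c * A d a * ((if a = b then (1:ℝ) else 0) * (if b = c then 1 else 0)
        * (if c = d then 1 else 0))
      = ∑ j, (A j j) ^ 2 := by
    simp [mul_ite, ite_mul, mul_zero, zero_mul, mul_one, Finset.sum_ite_eq, sq]
  have hsplit : ∀ a b c d : Fin p,
      A b c * A d a * ((q:ℝ) * ((if a = c then (1:ℝ) else 0) * (if b = d then 1 else 0)
        + (if a = d then (1:ℝ) else 0) * (if b = c then 1 else 0)
        + (ν - 3) * ((if a = b then (1:ℝ) else 0) * (if b = c then 1 else 0)
            * (if c = d then 1 else 0))))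
      = (q:ℝ) * (A b c * A d a * ((if a = c then (1:ℝ) else 0) * (if b = d then 1 else 0)))
        + (q:ℝ) * (A b c * A d a * ((if a = d then (1:ℝ) else 0) * (if b = c then 1 else 0)))
        + ((q:ℝ) * (ν - 3)) * (A b c * A d a * ((if a = b then (1:ℝ) else 0)
            * (if b = c then 1 else 0) * (if c = d then 1 else 0))) :=
    fun a b c d => by ring
  simp only [hsplit, Finset.sum_add_distrib, ← Finset.mul_sum]
  rw [hS1, hS2, hS3]
  ring
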